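/- Let k be a positive integer and let 𝓕 = {P ∈ ℚ[x] : deg P = k}. Then the field ℚ(𝓡_𝓕), the subfield of ℚ̄ generated over ℚ by all roots of all rational polynomials of degree exactly k, has property P: there exists α ∈ ℚ̄ such that αⁿ ∉ ℚ(𝓡_𝓕) for all integers n ≥ 1. -/

import Mathlib

open Polynomial IntermediateField Module

private theorem no_rat_root (p : ℕ) (hp : p.Prime) : ∀ b : ℚ, b ^ p ≠ 2 := by
  intro b hb
  have hbne : b ≠ 0 := by rintro rfl; simp [zero_pow hp.ne_zero] at hb
  have h1 := congrArg (padicValRat 2) hb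
  have h2 : padicValRat 2 2 = 1 := by
    have := padicValRat.self (p := 2) one_lt_two
    simpa using this
  rw [padicValRat.pow (q := b), h2] at h1
  have hdvd : (p : ℤ) ∣ 1 := ⟨padicValRat 2 b, h1.symm⟩
  have := Int.le_of_dvd one_pos hdvd
  have := hp.two_le
  omega

private theorem key_pow_ne (p : ℕ) (hp : 2 ≤ p) (β : AlgebraicClosure ℚ) (hβ : β ^ p = 2)
    (hdeg : (minpoly ℚ β).natDegree = p) (n : ℕ) (hn : 1 ≤ n) (q : ℚ) :
    (1 + β) ^ n ≠ algebraMap ℚ (AlgebraicClosure ℚ) q := by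
  intro heq
  have hp0 : 0 < p := by omega
  have li : LinearIndependent ℚ fun i : Fin p => β ^ (i : ℕ) := by
    have := linearIndependent_pow (K := ℚ) β
    rwa [hdeg] at this
  have hβj : ∀ j : ℕ, β ^ j = ((2:ℚ) ^ (j / p)) • β ^ (j % p) := by
    intro j
    conv_lhs => rw [← Nat.div_add_mod j p]
    rw [pow_add, pow_mul, hβ, Algebra.smul_def, map_pow]
    norm_num
  set g : ℕ → Fin p := fun j => ⟨j % p, Nat.mod_lt _ hp0⟩ with hg
  set c : Fin p → ℚ := fun i =>
    ∑ j ∈ (Finset.range (n+1)).filter (fun j => g j = i), (n.choose j : ℚ) * 2 ^ (j / p) with hc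
  have hA : (1 + β) ^ n = ∑ j ∈ Finset.range (n+1),
      ((n.choose j : ℚ) * 2 ^ (j / p)) • β ^ (j % p) := by
    rw [add_comm, add_pow]
    refine Finset.sum_congr rfl fun j _ => ?_
    rw [mul_smul, ← hβj j, one_pow, mul_one, Algebra.smul_def, map_natCast, mul_comm]
  have hB : ∑ i : Fin p, c i • β ^ (i : ℕ) = ∑ j ∈ Finset.range (n+1),
      ((n.choose j : ℚ) * 2 ^ (j / p)) • β ^ (j % p) := by
    rw [← Finset.sum_fiberwise (Finset.range (n+1)) g
      (fun j => ((n.choose j : ℚ) * 2 ^ (j / p)) • β ^ (j % p))]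
    refine Finset.sum_congr rfl fun i _ => ?_
    rw [hc, Finset.sum_smul]
    refine Finset.sum_congr rfl fun j hj => ?_
    have : j % p = (i : ℕ) := congrArg Fin.val (Finset.mem_filter.mp hj).2
    rw [this]
  set d : Fin p → ℚ := fun i => c i - (if i = ⟨0, hp0⟩ then q else 0) with hd
  have hrel : ∑ i : Fin p, d i • β ^ (i : ℕ) = 0 := by
    have hq : algebraMap ℚ (AlgebraicClosure ℚ) q
        = ∑ i : Fin p, (if i = ⟨0, hp0⟩ then q else 0) • β ^ (i : ℕ) := by
      rw [Finset.sum_eq_single (⟨0, hp0⟩ : Fin p)]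
      · simp [Algebra.smul_def]
      · intro b _ hb; simp [hb]
      · simp
    simp only [hd, sub_smul, Finset.sum_sub_distrib]
    rw [← hq, hB, ← hA, heq, sub_self]
  have hd1 : d ⟨1, by omega⟩ = 0 := Fintype.linearIndependent_iff.mp li d hrel _
  have h10 : (⟨1, by omega⟩ : Fin p) ≠ ⟨0, hp0⟩ := by
    intro h; simpa using congrArg Fin.val h
  simp only [hd, if_neg h10, sub_zero] at hd1
  have hpos : 0 < c ⟨1, by omega⟩ := by
    rw [hc]
    refine Finset.sum_pos' (fun j _ => by positivity) ⟨1, ?_, ?_⟩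
    · refine Finset.mem_filter.mpr ⟨Finset.mem_range.mpr (by omega), ?_⟩
      ext
      simp [hg, Nat.mod_eq_of_lt (show 1 < p by omega)]
    · have : (0:ℚ) < n.choose 1 := by simp; omega
      positivity
  rw [hd1] at hpos
  exact lt_irrefl _ hpos

private theorem adjoin_finset_primes (k : ℕ) (t : Finset (AlgebraicClosure ℚ))
    (hdeg : ∀ x ∈ t, (minpoly ℚ x).natDegree ≤ k) :
    FiniteDimensional ℚ (adjoin ℚ (t : Set (AlgebraicClosure ℚ))) ∧
      ∀ r : ℕ, r.Prime → r ∣ finrank ℚ (adjoin ℚ (t : Set (AlgebraicClosure ℚ))) → r ≤ k := by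
  refine induction_on_adjoin_finset t
    (fun K => FiniteDimensional ℚ K ∧ ∀ r : ℕ, r.Prime → r ∣ finrank ℚ K → r ≤ k) ?_ ?_
  · constructor
    · exact inferInstance
    · intro r hr hdvd
      rw [IntermediateField.finrank_bot] at hdvd
      exact absurd (Nat.eq_one_of_dvd_one hdvd) hr.ne_one
  · rintro K x hx ⟨hKfin, hKprime⟩
    have hxint : IsIntegral ℚ x := by
      have := (AlgebraicClosure.isAlgebraic ℚ).isAlgebraic x
      convert this.isIntegral
      · rfl
      · exact Subsingleton.elim _ _
    have hKx : IsIntegral K x := hxint.tower_top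
    have hfinKx : FiniteDimensional K K⟮x⟯ := IntermediateField.adjoin.finiteDimensional hKx
    have hfin : FiniteDimensional ℚ (K⟮x⟯.restrictScalars ℚ) := FiniteDimensional.trans ℚ K K⟮x⟯
    refine ⟨hfin, fun r hr hdvd => ?_⟩
    have hmul : finrank ℚ (K⟮x⟯.restrictScalars ℚ) = finrank ℚ K * finrank K K⟮x⟯ :=
      (Module.finrank_mul_finrank ℚ K K⟮x⟯).symm
    erw [hmul] at hdvd
    rcases (Nat.Prime.dvd_mul hr).mp hdvd with h | h
    · exact hKprime r hr h
    · have h1 : finrank K K⟮x⟯ = (minpoly K x).natDegree := IntermediateField.adjoin.finrank hKx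
      have h2 : (minpoly K x).natDegree ≤ (minpoly ℚ x).natDegree := by
        have hdvd2 : minpoly K x ∣ (minpoly ℚ x).map (algebraMap ℚ K) :=
          minpoly.dvd_map_of_isScalarTower ℚ K x
        have hne : (minpoly ℚ x).map (algebraMap ℚ K) ≠ 0 :=
          (Polynomial.map_ne_zero_iff (algebraMap ℚ K).injective).mpr (minpoly.ne_zero hxint)
        simpa [Polynomial.natDegree_map] using Polynomial.natDegree_le_of_dvd hdvd2 hne
      have hle : r ≤ finrank K K⟮x⟯ := Nat.le_of_dvd finrank_pos h
      calc r ≤ finrank K K⟮x⟯ := hle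
        _ = (minpoly K x).natDegree := h1
        _ ≤ (minpoly ℚ x).natDegree := h2
        _ ≤ k := hdeg x hx

/-- Let `k ≥ 1` and `𝓕 = {P ∈ ℚ[x] : deg P = k}`. Then the subfield of `ℚ̄` generated
over `ℚ` by all roots of all rational polynomials of degree exactly `k` has property P. -/
theorem stmt_4 (k : ℕ) (hk : 1 ≤ k) :
    ∃ α : AlgebraicClosure ℚ, ∀ n : ℕ, 1 ≤ n →
      α ^ n ∉ IntermediateField.adjoin ℚ
        {x : AlgebraicClosure ℚ | ∃ P : ℚ[X], P.natDegree = k ∧ aeval x P = 0} := by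
  obtain ⟨p, hpk, hp⟩ := Nat.exists_infinite_primes (k + 1)
  have hp2 : 2 ≤ p := hp.two_le
  -- a p-th root of 2
  obtain ⟨β, hβ⟩ := IsAlgClosed.exists_pow_nat_eq (k := AlgebraicClosure ℚ) 2 hp.pos
  have hirr : Irreducible (X ^ p - C (2:ℚ)) := X_pow_sub_C_irreducible_of_prime hp (no_rat_root p hp)
  have haev : aeval β (X ^ p - C (2:ℚ)) = 0 := by simp [hβ]
  have hminβ : minpoly ℚ β = X ^ p - C (2:ℚ) :=
    (minpoly.eq_of_irreducible_of_monic hirr haev (monic_X_pow_sub_C _ hp.ne_zero)).symm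
  have hdegβ : (minpoly ℚ β).natDegree = p := by
    rw [hminβ, natDegree_X_pow_sub_C]
  have hβint : IsIntegral ℚ β := by
    have := (AlgebraicClosure.isAlgebraic ℚ).isAlgebraic β
    convert this.isIntegral
    · rfl
    · exact Subsingleton.elim _ _
  refine ⟨1 + β, fun n hn hmem => ?_⟩
  -- the adjoined field of α = 1 + β equals that of β and has degree p
  have hαβ : ℚ⟮1 + β⟯ = ℚ⟮β⟯ := by
    apply le_antisymm
    · exact adjoin_simple_le_iff.mpr (add_mem (one_mem _) (mem_adjoin_simple_self ℚ β))
    · refine adjoin_simple_le_iff.mpr ?_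
      have h1 : (1 + β) - 1 ∈ ℚ⟮1 + β⟯ := sub_mem (mem_adjoin_simple_self ℚ (1 + β)) (one_mem _)
      simpa using h1
  have hfinα : finrank ℚ ℚ⟮1 + β⟯ = p := by
    rw [hαβ, IntermediateField.adjoin.finrank hβint, hdegβ]
  -- localize membership to a finite set of roots
  obtain ⟨T, hTsub, hmemT⟩ := exists_finset_of_mem_adjoin hmem
  have hTdeg : ∀ x ∈ T, (minpoly ℚ x).natDegree ≤ k := by
    intro x hx
    obtain ⟨P, hPdeg, hProot⟩ := hTsub hx
    have hP0 : P ≠ 0 := fun h => by simp [h] at hPdeg; omega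
    calc (minpoly ℚ x).natDegree ≤ P.natDegree :=
          Polynomial.natDegree_le_of_dvd (minpoly.dvd ℚ x hProot) hP0
      _ = k := hPdeg
  obtain ⟨hLfin, hLprime⟩ := adjoin_finset_primes k T hTdeg
  set L := adjoin ℚ (T : Set (AlgebraicClosure ℚ)) with hL
  -- the subfield generated by α^n
  have hEL : ℚ⟮(1 + β) ^ n⟯ ≤ L := adjoin_simple_le_iff.mpr hmemT
  have hEα : ℚ⟮(1 + β) ^ n⟯ ≤ ℚ⟮1 + β⟯ :=
    adjoin_simple_le_iff.mpr (pow_mem (mem_adjoin_simple_self ℚ (1 + β)) n)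
  have hdvdL : finrank ℚ ℚ⟮(1 + β) ^ n⟯ ∣ finrank ℚ L :=
    ⟨relfinrank ℚ⟮(1 + β) ^ n⟯ L, (finrank_bot_mul_relfinrank hEL).symm⟩
  have hdvdα : finrank ℚ ℚ⟮(1 + β) ^ n⟯ ∣ p := by
    rw [← hfinα]
    exact ⟨relfinrank ℚ⟮(1 + β) ^ n⟯ ℚ⟮1 + β⟯, (finrank_bot_mul_relfinrank hEα).symm⟩
  rcases (Nat.Prime.eq_one_or_self_of_dvd hp _ hdvdα) with h1 | hpeq
  · -- degree 1 : α^n rational, contradiction with key lemma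
    have hbot : ℚ⟮(1 + β) ^ n⟯ = ⊥ := IntermediateField.finrank_eq_one_iff.mp h1
    have : (1 + β) ^ n ∈ (⊥ : IntermediateField ℚ (AlgebraicClosure ℚ)) := by
      rw [← hbot]; exact mem_adjoin_simple_self ℚ _
    obtain ⟨q, hq⟩ := IntermediateField.mem_bot.mp this
    exact key_pow_ne p hp2 β hβ hdegβ n hn q hq.symm
  · -- degree p : p divides finrank of L, contradiction with prime bound
    have : p ∣ finrank ℚ L := hpeq ▸ hdvdL
    have := hLprime p hp this
    omega
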